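/- Fix γ ∈ (0,1), λ > 0, φ ∈ (0,1], a positive integer r, and θ > 0. Define, for ν ∈ (0,1), h(ν, θ) = ν · θ (r-1)! λ^{-r} Φ(-θ/φ, r, 1-γ) where Φ is the Lerch transcendent. Then, with ℓ_ν = log(ν^{-1}), lim_{ν→0} h(ν, ν^{-1/γ} ℓ_ν^{-(r-1)/γ} θ) = (φ^{1-γ} θ^γ / (λ^r γ^{r-1})) · π/sin(γπ). -/

import Mathlib

open MeasureTheory Real Set Filter Topology

/-- The Lerch transcendent `Φ(z,r,a)` for positive integer `r`, `a > 0`, `z < 0`, via its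
integral representation `Φ(z,r,a) = (1/(r-1)!)∫₀^∞ t^{r-1} e^{-at}/(1 - z e^{-t}) dt`. -/
noncomputable def lerchPhi (z : ℝ) (r : ℕ) (a : ℝ) : ℝ :=
  ((Nat.factorial (r - 1) : ℝ))⁻¹ * ∫ t in Ioi (0:ℝ), t ^ (r - 1) * Real.exp (-a * t) / (1 - z * Real.exp (-t))

lemma beta_real {a : ℝ} (ha0 : 0 < a) (ha1 : a < 1) :
    ∫ x in Ioo (0:ℝ) 1, x ^ (-a) * (1 - x) ^ (a - 1) = π / Real.sin (π * a) := by
  have h1a : 0 < 1 - a := by linarith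
  have key : Complex.betaIntegral (1 - a) a = ((π / Real.sin (π * a) : ℝ) : ℂ) := by
    have := Complex.Gamma_mul_Gamma_eq_betaIntegral (s := (1 - a : ℂ)) (t := (a : ℂ))
      (by simpa using h1a) (by simpa using ha0)
    rw [show ((1 : ℂ) - a + a) = 1 by ring, Complex.Gamma_one, one_mul] at this
    rw [← this, mul_comm]
    rw [show ((1 : ℂ) - a) = ((1 - a : ℝ) : ℂ) by push_cast; ring]
    rw [Complex.Gamma_ofReal, Complex.Gamma_ofReal, ← Complex.ofReal_mul,
      Real.Gamma_mul_Gamma_one_sub]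
  have h2 : Complex.betaIntegral (1 - a) a
      = ((∫ x in (0:ℝ)..1, x ^ (-a) * (1 - x) ^ (a - 1) : ℝ) : ℂ) := by
    rw [Complex.betaIntegral, ← intervalIntegral.integral_ofReal]
    refine intervalIntegral.integral_congr fun x hx => ?_
    rw [uIcc_of_le (by norm_num : (0:ℝ) ≤ 1)] at hx
    rw [show (1 - (a:ℂ) - 1) = ((-a : ℝ) : ℂ) by push_cast; ring,
      show ((a:ℂ) - 1) = ((a - 1 : ℝ) : ℂ) by push_cast; ring,
      show (1 - (x:ℂ)) = ((1 - x : ℝ) : ℂ) by push_cast; ring,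
      ← Complex.ofReal_cpow hx.1, ← Complex.ofReal_cpow (by linarith [hx.2]),
      ← Complex.ofReal_mul]
  have h3 : (∫ x in (0:ℝ)..1, x ^ (-a) * (1 - x) ^ (a - 1) : ℝ) = π / Real.sin (π * a) := by
    have := h2.symm.trans key
    exact_mod_cast this
  rw [← h3, intervalIntegral.integral_of_le (by norm_num : (0:ℝ) ≤ 1),
    ← integral_Ioc_eq_integral_Ioo]

lemma logit_integral {a : ℝ} (ha0 : 0 < a) (ha1 : a < 1) :
    ∫ u : ℝ, Real.exp (-a * u) / (1 + Real.exp (-u)) = π / Real.sin (π * a) := by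
  set f : ℝ → ℝ := fun x => Real.log x - Real.log (1 - x) with hf
  set f' : ℝ → ℝ := fun x => x⁻¹ + (1 - x)⁻¹ with hf'
  have hderiv : ∀ x ∈ Ioo (0:ℝ) 1, HasDerivAt f (f' x) x := by
    intro x hx
    have hx0 : x ≠ 0 := ne_of_gt hx.1
    have hx1 : (1:ℝ) - x ≠ 0 := by have := hx.2; intro h; linarith [sub_eq_zero.mp h]
    have h1 : HasDerivAt (fun y : ℝ => Real.log (1 - y)) (-1 / (1 - x)) x := by
      simpa using (((hasDerivAt_id x).const_sub 1).log hx1)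
    have := (Real.hasDerivAt_log hx0).sub h1
    refine this.congr_deriv ?_
    show x⁻¹ - -1 / (1 - x) = x⁻¹ + (1 - x)⁻¹
    field_simp
    ring
  have hmono : StrictMonoOn f (Ioo (0:ℝ) 1) := by
    intro x hx y hy hxy
    have h1 : Real.log x < Real.log y := Real.log_lt_log hx.1 hxy
    have h2 : Real.log (1 - y) < Real.log (1 - x) :=
      Real.log_lt_log (by linarith [hy.2]) (by linarith)
    simp only [hf]; linarith
  have himg : f '' Ioo (0:ℝ) 1 = univ := by
    ext u
    simp only [mem_image, mem_univ, iff_true]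
    refine ⟨(1 + Real.exp (-u))⁻¹, ⟨?_, ?_⟩, ?_⟩
    · positivity
    · rw [inv_lt_one_iff₀]; right; linarith [Real.exp_pos (-u)]
    · have hpos : (0:ℝ) < 1 + Real.exp (-u) := by positivity
      have hx0 : (0:ℝ) < (1 + Real.exp (-u))⁻¹ := by positivity
      have h1x : 1 - (1 + Real.exp (-u))⁻¹ = Real.exp (-u) / (1 + Real.exp (-u)) := by
        field_simp
        ring
      simp only [hf, h1x]
      rw [Real.log_div (by positivity) (by positivity), Real.log_inv, Real.log_exp]
      ring
  have key := integral_image_eq_integral_abs_deriv_smul measurableSet_Ioo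
    (fun x hx => (hderiv x hx).hasDerivWithinAt) hmono.injOn
    (fun u => Real.exp (-a * u) / (1 + Real.exp (-u)))
  rw [himg] at key
  rw [← setIntegral_univ, key, ← beta_real ha0 ha1]
  refine setIntegral_congr_fun measurableSet_Ioo fun x hx => ?_
  have hx0 : (0:ℝ) < x := hx.1
  have hx1 : (0:ℝ) < 1 - x := by linarith [hx.2]
  have hefx : Real.exp (f x) = x / (1 - x) := by
    simp only [hf]
    rw [Real.exp_sub, Real.exp_log hx0, Real.exp_log hx1]
  have hefnx : Real.exp (-f x) = (1 - x) / x := by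
    rw [Real.exp_neg, hefx, inv_div]
  have hea : Real.exp (-a * f x) = x ^ (-a) * (1 - x) ^ a := by
    have : Real.exp (-a * f x) = Real.exp (f x) ^ (-a) := by
      rw [Real.rpow_def_of_pos (Real.exp_pos _), Real.log_exp]; ring_nf
    rw [this, hefx, Real.div_rpow hx0.le hx1.le, Real.rpow_neg hx0.le,
      Real.rpow_neg hx1.le]
    field_simp
  have hden : 1 + Real.exp (-f x) = x⁻¹ := by
    rw [hefnx]; field_simp
    ring
  have habs : |f' x| = (x * (1 - x))⁻¹ := by
    rw [abs_of_pos (by positivity : (0:ℝ) < f' x)]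
    simp only [hf']
    field_simp
    ring
  rw [smul_eq_mul, hea, hden, habs]
  rw [show a - 1 = a + (-1) by ring, Real.rpow_add hx1, Real.rpow_neg_one]
  field_simp

lemma bound_integrable {a : ℝ} (ha0 : 0 < a) (ha1 : a < 1) (k : ℕ) :
    Integrable (fun u : ℝ => (1 + max u 0) ^ k * (Real.exp (-a * u) / (1 + Real.exp (-u)))) := by
  have hden : ∀ u : ℝ, (0:ℝ) < 1 + Real.exp (-u) := fun u => by positivity
  have hcont : Continuous (fun u : ℝ => (1 + max u 0) ^ k *
      (Real.exp (-a * u) / (1 + Real.exp (-u)))) := by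
    refine Continuous.mul (by continuity) (Continuous.div (by continuity) (by continuity)
      fun u => (hden u).ne')
  have hmeas := hcont.aestronglyMeasurable (μ := (volume : Measure ℝ))
  rw [← integrableOn_univ, ← @Iio_union_Ici _ _ (0 : ℝ), integrableOn_union]
  constructor
  · have hExp : IntegrableOn (fun u : ℝ => Real.exp ((1 - a) * u)) (Iio (0:ℝ)) := by
      rw [← (Measure.measurePreserving_neg (volume : Measure ℝ)).integrableOn_comp_preimage
          (Homeomorph.neg ℝ).measurableEmbedding]
      simp only [Function.comp_def, neg_preimage, neg_Iio, neg_zero]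
      have := exp_neg_integrableOn_Ioi 0 (show (0:ℝ) < 1 - a by linarith)
      refine this.congr_fun (fun x _ => ?_) measurableSet_Ioi
      ring_nf
    refine Integrable.mono' hExp hmeas.restrict ?_
    filter_upwards [ae_restrict_mem measurableSet_Iio] with u hu
    have hu0 : u < 0 := hu
    have hmax : max u 0 = 0 := max_eq_right hu0.le
    rw [Real.norm_eq_abs, abs_of_nonneg (by positivity), hmax, add_zero, one_pow, one_mul]
    have h1 : Real.exp (-a * u) / (1 + Real.exp (-u)) ≤ Real.exp (-a * u) / Real.exp (-u) :=
      div_le_div_of_nonneg_left (Real.exp_pos _).le (Real.exp_pos _) (by linarith)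
    calc Real.exp (-a * u) / (1 + Real.exp (-u)) ≤ Real.exp (-a * u) / Real.exp (-u) := h1
      _ = Real.exp ((1 - a) * u) := by rw [← Real.exp_sub]; ring_nf
  · rw [integrableOn_Ici_iff_integrableOn_Ioi]
    have hInt1 : IntegrableOn (fun x : ℝ => Real.exp (-a * x)) (Ioi (0:ℝ)) :=
      exp_neg_integrableOn_Ioi 0 ha0
    have hInt2 : IntegrableOn (fun x : ℝ => x ^ k * Real.exp (-a * x)) (Ioi (0:ℝ)) := by
      have := integrableOn_rpow_mul_exp_neg_mul_rpow
        (show (-1:ℝ) < (k:ℝ) by exact_mod_cast neg_one_lt_zero.trans_le (Nat.cast_nonneg k)) zero_lt_one ha0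
      refine this.congr_fun (fun x hx => ?_) measurableSet_Ioi
      beta_reduce
      rw [Real.rpow_natCast, Real.rpow_one]
    have hsum := (hInt1.add hInt2).const_mul ((2:ℝ) ^ k)
    refine Integrable.mono' hsum hmeas.restrict ?_
    filter_upwards [ae_restrict_mem measurableSet_Ioi] with u hu
    have hu0 : (0:ℝ) < u := hu
    have hmax : max u 0 = u := max_eq_left hu0.le
    rw [Real.norm_eq_abs, abs_of_nonneg (by positivity), hmax]
    have h1 : Real.exp (-a * u) / (1 + Real.exp (-u)) ≤ Real.exp (-a * u) := by
      rw [div_le_iff₀ (hden u)]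
      nlinarith [Real.exp_pos (-u), Real.exp_pos (-a*u)]
    have h2 : (1 + u) ^ k ≤ 2 ^ k * (1 + u ^ k) := by
      have hle : 1 + u ≤ 2 * max 1 u := by
        rcases le_total u 1 with h | h
        · calc 1 + u ≤ 2 := by linarith
            _ ≤ 2 * max 1 u := by nlinarith [le_max_left (1:ℝ) u]
        · calc 1 + u ≤ u + u := by linarith
            _ = 2 * u := by ring
            _ ≤ 2 * max 1 u := by nlinarith [le_max_right (1:ℝ) u]
      calc (1 + u) ^ k ≤ (2 * max 1 u) ^ k :=
            pow_le_pow_left₀ (by positivity) hle k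
        _ = 2 ^ k * (max 1 u) ^ k := mul_pow 2 _ k
        _ ≤ 2 ^ k * (1 + u ^ k) := by
            gcongr
            rcases le_total u 1 with h | h
            · rw [max_eq_left h]; simp; positivity
            · rw [max_eq_right h]; nlinarith
    calc (1 + u) ^ k * (Real.exp (-a * u) / (1 + Real.exp (-u)))
        ≤ (1 + u) ^ k * Real.exp (-a * u) := by
          apply mul_le_mul_of_nonneg_left h1 (by positivity)
      _ ≤ 2 ^ k * (1 + u ^ k) * Real.exp (-a * u) := by
          apply mul_le_mul_of_nonneg_right h2 (Real.exp_pos _).le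
      _ = 2 ^ k * (Real.exp (-a * u) + u ^ k * Real.exp (-a * u)) := by ring

lemma key_tendsto {a : ℝ} (ha0 : 0 < a) (ha1 : a < 1) (k : ℕ) {ι : Type*} {l : Filter ι}
    [l.IsCountablyGenerated] {L : ι → ℝ} (hL : Tendsto L l atTop) :
    Tendsto (fun n => ∫ u : ℝ, (Ioi (-(L n))).indicator
      (fun u => (1 + u / L n) ^ k * (Real.exp (-a * u) / (1 + Real.exp (-u)))) u) l
      (𝓝 (π / Real.sin (π * a))) := by
  have hden : ∀ u : ℝ, (0:ℝ) < 1 + Real.exp (-u) := fun u => by positivity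
  rw [← logit_integral ha0 ha1]
  refine tendsto_integral_filter_of_dominated_convergence
    (fun u : ℝ => (1 + max u 0) ^ k * (Real.exp (-a * u) / (1 + Real.exp (-u))))
    ?_ ?_ (bound_integrable ha0 ha1 k) ?_
  · refine Eventually.of_forall fun n => ?_
    refine (Continuous.aestronglyMeasurable ?_).indicator measurableSet_Ioi
    exact Continuous.mul (by continuity)
      (Continuous.div (by continuity) (by continuity) fun u => (hden u).ne')
  · filter_upwards [hL.eventually_ge_atTop 1] with n hn
    refine ae_of_all _ fun u => ?_
    by_cases hu : u ∈ Ioi (-(L n))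
    · rw [indicator_of_mem hu]
      have hL0 : (0:ℝ) < L n := by linarith
      have hbase : (0:ℝ) ≤ 1 + u / L n := by
        have : -1 < u / L n := by
          rw [lt_div_iff₀ hL0]
          have := mem_Ioi.mp hu
          nlinarith
        linarith
      rw [Real.norm_eq_abs, abs_of_nonneg (by positivity)]
      have hle : 1 + u / L n ≤ 1 + max u 0 := by
        rcases le_total u 0 with h | h
        · have : u / L n ≤ 0 := div_nonpos_of_nonpos_of_nonneg h hL0.le
          have := le_max_right u 0
          linarith [le_max_right u (0:ℝ)]
        · rw [max_eq_left h]
          have : u / L n ≤ u := div_le_self h hn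
          linarith
      exact mul_le_mul_of_nonneg_right (pow_le_pow_left₀ hbase hle k) (by positivity)
    · rw [indicator_of_notMem hu, norm_zero]
      have : (0:ℝ) ≤ 1 + max u 0 := by positivity
      positivity
  · refine ae_of_all _ fun u => ?_
    have h0 : Tendsto (fun n => u / L n) l (𝓝 0) := by
      simpa [div_eq_mul_inv] using hL.inv_tendsto_atTop.const_mul u
    have h1 : Tendsto (fun n => (1 + u / L n) ^ k *
        (Real.exp (-a * u) / (1 + Real.exp (-u)))) l
        (𝓝 (Real.exp (-a * u) / (1 + Real.exp (-u)))) := by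
      have := (((tendsto_const_nhds (x := (1:ℝ))).add h0).pow k).mul_const
        (Real.exp (-a * u) / (1 + Real.exp (-u)))
      simpa using this
    refine h1.congr' ?_
    filter_upwards [hL.eventually_gt_atTop (-u)] with n hn
    rw [indicator_of_mem (by simpa [mem_Ioi] using hn.trans_le (le_refl _) |> neg_lt.mp)]

theorem h_limit_fitness_increase (γ lam φ θ : ℝ) (r : ℕ)
    (hγ0 : 0 < γ) (hγ1 : γ < 1) (hlam : 0 < lam) (hφ0 : 0 < φ) (hφ1 : φ ≤ 1)
    (hr : 0 < r) (hθ : 0 < θ) :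
    Tendsto (fun ν : ℝ =>
        ν * (ν ^ (-1 / γ) * (Real.log ν⁻¹) ^ (-((r : ℝ) - 1) / γ) * θ) * (Nat.factorial (r - 1) : ℝ) *
          lam ^ (-(r : ℤ)) *
          lerchPhi (-(ν ^ (-1 / γ) * (Real.log ν⁻¹) ^ (-((r : ℝ) - 1) / γ) * θ) / φ) r (1 - γ))
      (nhdsWithin 0 (Ioo 0 1))
      (𝓝 ((φ ^ (1 - γ) * θ ^ γ / (lam ^ r * γ ^ (r - 1))) * (π / Real.sin (γ * π)))) := by
  set l : Filter ℝ := nhdsWithin 0 (Ioo 0 1) with hl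
  set k : ℕ := r - 1 with hk
  have hrk : ((r : ℝ) - 1) = (k : ℝ) := by
    rw [hk]; push_cast [Nat.cast_sub hr]; ring
  set a : ℝ := 1 - γ with ha
  have ha0 : 0 < a := by rw [ha]; linarith
  have ha1 : a < 1 := by rw [ha]; linarith
  set ℓf : ℝ → ℝ := fun ν => Real.log ν⁻¹ with hℓf
  set zf : ℝ → ℝ := fun ν => ν ^ (-1 / γ) * (ℓf ν) ^ (-((r : ℝ) - 1) / γ) * θ with hzf
  set Lf : ℝ → ℝ := fun ν => Real.log (zf ν / φ) with hLf
  set B : ℝ := ((r : ℝ) - 1) / γ with hB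
  set c : ℝ := Real.log θ - Real.log φ with hc
  have hB0 : 0 ≤ B := by
    rw [hB, hrk]; positivity
  -- ℓf tends to atTop
  have hℓ : Tendsto ℓf l atTop := by
    have h1 : Tendsto Real.log l atBot :=
      Real.tendsto_log_nhdsGT_zero.mono_left
        (nhdsWithin_mono _ Ioo_subset_Ioi_self)
    have h2 : Tendsto (fun ν : ℝ => -Real.log ν) l atTop := tendsto_neg_atBot_atTop.comp h1
    refine h2.congr fun ν => ?_
    rw [hℓf]; simp [Real.log_inv]
  -- F tends to atTop
  have hF : Tendsto (fun t : ℝ => t / γ - B * Real.log t + c) atTop atTop := by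
    have hlo : (fun t : ℝ => B * Real.log t) =o[atTop] id :=
      Real.isLittleO_log_id_atTop.const_mul_left B
    have hb := hlo.bound (show (0:ℝ) < 1 / (2 * γ) by positivity)
    refine tendsto_atTop_mono' _ ?_
      (tendsto_atTop_add_const_right _ c (tendsto_id.const_mul_atTop
        (show (0:ℝ) < 1 / (2 * γ) by positivity)))
    filter_upwards [hb, eventually_ge_atTop (0:ℝ)] with t ht ht0
    simp only [id_eq] at ht ⊢
    have h1 : B * Real.log t ≤ (1 / (2 * γ)) * t := by
      calc B * Real.log t ≤ ‖B * Real.log t‖ := le_norm_self _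
        _ ≤ 1 / (2 * γ) * ‖t‖ := ht
        _ = 1 / (2 * γ) * t := by rw [Real.norm_eq_abs, abs_of_nonneg ht0]
    have h2 : t / γ = (1 / (2 * γ)) * t + (1 / (2 * γ)) * t := by field_simp; ring
    linarith
  -- eventual formula for Lf
  have hLeq : ∀ᶠ ν in l, Lf ν = ℓf ν / γ - B * Real.log (ℓf ν) + c := by
    filter_upwards [self_mem_nhdsWithin] with ν hν
    obtain ⟨hν0, hν1⟩ := hν
    have hℓ0 : 0 < ℓf ν := Real.log_pos ((one_lt_inv₀ hν0).mpr hν1)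
    have hp1 : (0:ℝ) < ν ^ (-1 / γ) := Real.rpow_pos_of_pos hν0 _
    have hp2 : (0:ℝ) < (ℓf ν) ^ (-((r : ℝ) - 1) / γ) := Real.rpow_pos_of_pos hℓ0 _
    rw [hLf]
    simp only
    have hzpos : (0:ℝ) < zf ν := by
      rw [hzf]; exact mul_pos (mul_pos hp1 hp2) hθ
    rw [Real.log_div hzpos.ne' hφ0.ne', hzf]
    simp only
    rw [Real.log_mul (mul_pos hp1 hp2).ne' hθ.ne', Real.log_mul hp1.ne' hp2.ne',
      Real.log_rpow hν0, Real.log_rpow hℓ0]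
    have hlν : Real.log ν = -ℓf ν := by rw [hℓf]; simp [Real.log_inv]
    rw [hlν, hB, hc]
    field_simp
    ring
  have hLtop : Tendsto Lf l atTop :=
    Tendsto.congr' (hLeq.mono fun ν h => h.symm) (hF.comp hℓ)
  -- ratio tends to 1/γ
  have hRatio : Tendsto (fun ν => Lf ν / ℓf ν) l (𝓝 (1 / γ)) := by
    have hdiv : Tendsto (fun t : ℝ => 1 / γ - B * (Real.log t / t) + c * t⁻¹) atTop
        (𝓝 (1 / γ)) := by
      have h1 : Tendsto (fun t : ℝ => Real.log t / t) atTop (𝓝 0) :=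
        Real.isLittleO_log_id_atTop.tendsto_div_nhds_zero
      have h2 : Tendsto (fun t : ℝ => t⁻¹) atTop (𝓝 0) := tendsto_inv_atTop_zero
      have := (tendsto_const_nhds (x := 1/γ)).sub ((tendsto_const_nhds (x := B)).mul h1)
        |>.add ((tendsto_const_nhds (x := c)).mul h2)
      simpa using this
    refine Tendsto.congr' ?_ (hdiv.comp hℓ)
    filter_upwards [hLeq, hℓ.eventually_gt_atTop 0] with ν heq hℓ0
    simp only [Function.comp]
    rw [heq]
    field_simp
  -- the DCT limit
  have hK := key_tendsto ha0 ha1 k hLtop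
  set K : ℝ → ℝ := fun ν => ∫ u : ℝ, (Ioi (-(Lf ν))).indicator
      (fun u => (1 + u / Lf ν) ^ k * (Real.exp (-a * u) / (1 + Real.exp (-u)))) u with hKdef
  -- main eventual identity
  have hmain : ∀ᶠ ν in l,
      ν * (ν ^ (-1 / γ) * (Real.log ν⁻¹) ^ (-((r : ℝ) - 1) / γ) * θ) * (Nat.factorial (r - 1) : ℝ) *
          lam ^ (-(r : ℤ)) *
          lerchPhi (-(ν ^ (-1 / γ) * (Real.log ν⁻¹) ^ (-((r : ℝ) - 1) / γ) * θ) / φ) r (1 - γ)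
        = (θ ^ γ * φ ^ (1 - γ) * (lam ^ r)⁻¹) * ((Lf ν / ℓf ν) ^ k * K ν) := by
    filter_upwards [self_mem_nhdsWithin, hLtop.eventually_gt_atTop 0] with ν hν hL0
    obtain ⟨hν0, hν1⟩ := hν
    have hℓ0 : 0 < ℓf ν := Real.log_pos ((one_lt_inv₀ hν0).mpr hν1)
    have hz0 : 0 < zf ν := by
      rw [hzf]
      have := Real.rpow_pos_of_pos hν0 (-1/γ)
      have := Real.rpow_pos_of_pos hℓ0 (-((r : ℝ) - 1) / γ)
      positivity
    set L : ℝ := Lf ν with hLdef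
    set x : ℝ := zf ν / φ with hx
    have hx0 : 0 < x := by positivity
    have hxL : Real.log x = L := rfl
    have hexpL : Real.exp L = x := by rw [← hxL, Real.exp_log hx0]
    -- the integral identity
    have hJ : (∫ t in Ioi (0:ℝ), t ^ k * Real.exp (-a * t) / (1 + x * Real.exp (-t)))
        = x ^ (-a) * L ^ k * K ν := by
      rw [← integral_indicator measurableSet_Ioi]
      rw [← integral_add_right_eq_self
        (fun t => (Ioi (0:ℝ)).indicator
          (fun t => t ^ k * Real.exp (-a * t) / (1 + x * Real.exp (-t))) t) L]
      rw [hKdef]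
      simp only
      rw [← integral_const_mul]
      congr 1
      funext u
      by_cases hu : u ∈ Ioi (-L)
      · have hu' : u + L ∈ Ioi (0:ℝ) := by simp only [mem_Ioi] at *; linarith
        rw [indicator_of_mem hu', indicator_of_mem hu]
        have h1 : x * Real.exp (-(u + L)) = Real.exp (-u) := by
          rw [← hexpL, ← Real.exp_add]; ring_nf
        have h2 : Real.exp (-a * (u + L)) = Real.exp (-a * u) * x ^ (-a) := by
          rw [Real.rpow_def_of_pos hx0, hxL, ← Real.exp_add]; ring_nf
        have h3 : (u + L) ^ k = L ^ k * (1 + u / L) ^ k := by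
          rw [← mul_pow]
          congr 1
          field_simp
          ring
        rw [h1, h2, h3]
        ring
      · have hu' : u + L ∉ Ioi (0:ℝ) := by
          simp only [mem_Ioi] at *; linarith
        rw [indicator_of_notMem hu', indicator_of_notMem hu, mul_zero]
    -- rewrite lerchPhi
    have hfac : (Nat.factorial (r-1) : ℝ) ≠ 0 := Nat.cast_ne_zero.mpr (Nat.factorial_ne_zero _)
    have hlerch : lerchPhi (-(zf ν) / φ) r (1 - γ)
        = ((Nat.factorial (r - 1) : ℝ))⁻¹ * (x ^ (-a) * L ^ k * K ν) := by
      rw [lerchPhi, ← hJ]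
      congr 1
      refine setIntegral_congr_fun measurableSet_Ioi fun t ht => ?_
      have : -(zf ν) / φ = -x := by rw [hx]; ring
      rw [this, ha]
      ring_nf
      rfl
    -- algebra
    have halg : ν * zf ν * x ^ (-a) * L ^ k = θ ^ γ * φ ^ (1 - γ) * (L / ℓf ν) ^ k := by
      have e1 : x ^ (-a) = zf ν ^ (-a) * φ ^ (1 - γ) := by
        rw [hx, Real.div_rpow hz0.le hφ0.le, div_eq_mul_inv, ← Real.rpow_neg hφ0.le, ha,
          neg_neg]
      have e2 : zf ν * zf ν ^ (-a) = zf ν ^ γ := by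
        nth_rewrite 1 [← Real.rpow_one (zf ν)]
        rw [← Real.rpow_add hz0]
        congr 1
        rw [ha]; ring
      have e3 : zf ν ^ γ = ν⁻¹ * (ℓf ν ^ k)⁻¹ * θ ^ γ := by
        rw [hzf]
        simp only
        rw [Real.mul_rpow (by positivity) hθ.le,
          Real.mul_rpow (Real.rpow_nonneg hν0.le _) (Real.rpow_nonneg hℓ0.le _),
          ← Real.rpow_natCast (ℓf ν) k,
          ← Real.rpow_mul hν0.le, ← Real.rpow_mul hℓ0.le, ← Real.rpow_neg hℓ0.le]
        congr 2
        · rw [show -1 / γ * γ = -1 by field_simp, Real.rpow_neg_one]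
        · rw [hrk]; congr 1; field_simp
      calc ν * zf ν * x ^ (-a) * L ^ k
          = ν * (zf ν * zf ν ^ (-a)) * φ ^ (1 - γ) * L ^ k := by rw [e1]; ring
        _ = ν * (ν⁻¹ * (ℓf ν ^ k)⁻¹ * θ ^ γ) * φ ^ (1 - γ) * L ^ k := by rw [e2, e3]
        _ = θ ^ γ * φ ^ (1 - γ) * (L ^ k / ℓf ν ^ k) := by
            field_simp
        _ = θ ^ γ * φ ^ (1 - γ) * (L / ℓf ν) ^ k := by rw [div_pow]
    have hzpow : lam ^ (-(r : ℤ)) = (lam ^ r)⁻¹ := by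
      rw [zpow_neg, zpow_natCast]
    calc ν * zf ν * (Nat.factorial (r - 1) : ℝ) * lam ^ (-(r : ℤ))
          * lerchPhi (-(zf ν) / φ) r (1 - γ)
        = ν * zf ν * (Nat.factorial (r - 1) : ℝ) * (lam ^ r)⁻¹ *
            (((Nat.factorial (r - 1) : ℝ))⁻¹ * (x ^ (-a) * L ^ k * K ν)) := by
          rw [hlerch, hzpow]
      _ = (ν * zf ν * x ^ (-a) * L ^ k) * (lam ^ r)⁻¹ * K ν := by
          field_simp
      _ = (θ ^ γ * φ ^ (1 - γ) * (L / ℓf ν) ^ k) * (lam ^ r)⁻¹ * K ν := by rw [halg]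
      _ = (θ ^ γ * φ ^ (1 - γ) * (lam ^ r)⁻¹) * ((L / ℓf ν) ^ k * K ν) := by ring
  -- conclude
  have hfinal : Tendsto (fun ν => (θ ^ γ * φ ^ (1 - γ) * (lam ^ r)⁻¹) *
      ((Lf ν / ℓf ν) ^ k * K ν)) l
      (𝓝 ((θ ^ γ * φ ^ (1 - γ) * (lam ^ r)⁻¹) * ((1/γ) ^ k * (π / Real.sin (π * a))))) :=
    (((hRatio.pow k).mul hK).const_mul _)
  have hsin : Real.sin (γ * π) ≠ 0 :=
    (Real.sin_pos_of_pos_of_lt_pi (by positivity) (by nlinarith [Real.pi_pos])).ne'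
  have hconst : (θ ^ γ * φ ^ (1 - γ) * (lam ^ r)⁻¹) * ((1/γ) ^ k * (π / Real.sin (π * a)))
      = (φ ^ (1 - γ) * θ ^ γ / (lam ^ r * γ ^ (r - 1))) * (π / Real.sin (γ * π)) := by
    rw [ha, show π * (1 - γ) = π - γ * π by ring, Real.sin_pi_sub, ← hk]
    rw [div_pow, one_pow]
    field_simp
  rw [← hconst]
  exact Tendsto.congr' (hmain.mono fun ν h => h.symm) hfinal
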